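/- (Pentagon equation from a bialgebra.) Let V be a bialgebra over a field k, with multiplication ∇ : V ⊗ V → V and comultiplication Δ : V → V ⊗ V. Define the linear map S = (id_V ⊗ ∇) ∘ (Δ ⊗ id_V) : V ⊗ V → V ⊗ V. For 1 ≤ i < j ≤ 3 let S_{i,j} denote the endomorphism of V^{⊗3} acting as S on the i-th and j-th tensor factors and as the identity on the remaining factor (so S_{1,2} = S ⊗ id_V, S_{2,3} = id_V ⊗ S, and S_{1,3} = (id_V ⊗ σ) ∘ (S ⊗ id_V) ∘ (id_V ⊗ σ), where σ : V ⊗ V → V ⊗ V is the flip x ⊗ y ↦ y ⊗ x). Then S_{1,2} ∘ S_{1,3} ∘ S_{2,3} = S_{2,3} ∘ S_{1,2} as endomorphisms of V^{⊗3}. -/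

import Mathlib

set_option synthInstance.maxHeartbeats 1000000
set_option maxHeartbeats 1000000


open TensorProduct

noncomputable section

namespace PentagonBialgebra

variable (k V : Type*) [Field k] [Ring V] [Bialgebra k V]

/-- The flip `σ : V ⊗ V → V ⊗ V`, `x ⊗ y ↦ y ⊗ x`. -/
def flip : V ⊗[k] V →ₗ[k] V ⊗[k] V := (TensorProduct.comm k V V).toLinearMap

/-- The operator `S = (id_V ⊗ ∇) ∘ (Δ ⊗ id_V) : V ⊗ V → V ⊗ V` (with the
associativity isomorphism inserted). -/
def Sop : V ⊗[k] V →ₗ[k] V ⊗[k] V :=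
  (TensorProduct.map LinearMap.id (LinearMap.mul' k V)) ∘ₗ
    (TensorProduct.assoc k V V V).toLinearMap ∘ₗ
      (TensorProduct.map Coalgebra.comul LinearMap.id)

/-- `S_{1,2} = S ⊗ id_V`, acting on `V^{⊗3} = V ⊗ (V ⊗ V)`. -/
def S12 : V ⊗[k] (V ⊗[k] V) →ₗ[k] V ⊗[k] (V ⊗[k] V) :=
  (TensorProduct.assoc k V V V).toLinearMap ∘ₗ
    (TensorProduct.map (Sop k V) LinearMap.id) ∘ₗ
      (TensorProduct.assoc k V V V).symm.toLinearMap

/-- `S_{2,3} = id_V ⊗ S`, acting on `V^{⊗3} = V ⊗ (V ⊗ V)`. -/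
def S23 : V ⊗[k] (V ⊗[k] V) →ₗ[k] V ⊗[k] (V ⊗[k] V) :=
  TensorProduct.map LinearMap.id (Sop k V)

/-- `S_{1,3} = (id_V ⊗ σ) ∘ (S ⊗ id_V) ∘ (id_V ⊗ σ)`. -/
def S13 : V ⊗[k] (V ⊗[k] V) →ₗ[k] V ⊗[k] (V ⊗[k] V) :=
  (TensorProduct.map LinearMap.id (flip k V)) ∘ₗ S12 k V ∘ₗ
    (TensorProduct.map LinearMap.id (flip k V))

open Coalgebra

/-- `Sop` on a pure tensor, in terms of a chosen representation of `comul x`. -/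
lemma Sop_tmul (x y : V) {ι : Type*} (r : Coalgebra.Repr k x ι) :
    Sop k V (x ⊗ₜ[k] y) = ∑ i ∈ r.index, r.left i ⊗ₜ[k] (r.right i * y) := by
  simp only [Sop, LinearMap.comp_apply, TensorProduct.map_tmul, LinearMap.id_coe, id_eq]
  rw [← r.eq, TensorProduct.sum_tmul, map_sum, map_sum]
  simp only [LinearEquiv.coe_coe, TensorProduct.assoc_tmul, TensorProduct.map_tmul,
    LinearMap.id_coe, id_eq, LinearMap.mul'_apply]

lemma S12_tmul (x y z : V) {ι : Type*} (r : Coalgebra.Repr k x ι) :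
    S12 k V (x ⊗ₜ[k] (y ⊗ₜ[k] z)) =
      ∑ i ∈ r.index, r.left i ⊗ₜ[k] ((r.right i * y) ⊗ₜ[k] z) := by
  simp only [S12, LinearMap.comp_apply, LinearEquiv.coe_coe, TensorProduct.assoc_symm_tmul]
  rw [TensorProduct.map_tmul, Sop_tmul k V x y r, TensorProduct.sum_tmul, map_sum]
  simp only [LinearMap.id_coe, id_eq, TensorProduct.assoc_tmul]

lemma S13_tmul (x y z : V) {ι : Type*} (r : Coalgebra.Repr k x ι) :
    S13 k V (x ⊗ₜ[k] (y ⊗ₜ[k] z)) =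
      ∑ i ∈ r.index, r.left i ⊗ₜ[k] (y ⊗ₜ[k] (r.right i * z)) := by
  simp only [S13, flip, LinearMap.comp_apply, TensorProduct.map_tmul, LinearMap.id_coe,
    id_eq, LinearEquiv.coe_coe, TensorProduct.comm_tmul]
  rw [S12_tmul k V x z y r, map_sum]
  simp only [TensorProduct.map_tmul, LinearMap.id_coe, id_eq, LinearEquiv.coe_coe,
    TensorProduct.comm_tmul]

/-- A representation of `comul (a * b)` built from representations of `comul a`, `comul b`. -/
def mulRepr (a b : V) {ι κ : Type*} (ra : Coalgebra.Repr k a ι) (rb : Coalgebra.Repr k b κ) :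
    Coalgebra.Repr k (a * b) (ι × κ) where
  index := ra.index ×ˢ rb.index
  left p := ra.left p.1 * rb.left p.2
  right p := ra.right p.1 * rb.right p.2
  eq := by
    rw [Bialgebra.comul_mul, ← ra.eq, ← rb.eq, Finset.sum_mul_sum, Finset.sum_product]
    simp [Algebra.TensorProduct.tmul_mul_tmul]

/-- Pentagon equation for the operator `S` built from a bialgebra:
`S_{1,2} ∘ S_{1,3} ∘ S_{2,3} = S_{2,3} ∘ S_{1,2}` as endomorphisms of `V^{⊗3}`. -/
theorem pentagon_of_bialgebra : S12 k V ∘ₗ S13 k V ∘ₗ S23 k V = S23 k V ∘ₗ S12 k V := by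
  apply TensorProduct.ext
  apply LinearMap.ext; intro x
  apply TensorProduct.ext'
  intro y z
  set rx := ℛ k x with hrx
  set ry := ℛ k y with hry
  -- RHS
  have hR : (S23 k V ∘ₗ S12 k V) (x ⊗ₜ[k] (y ⊗ₜ[k] z)) =
      ∑ i ∈ rx.index, ∑ p ∈ ((ℛ k (rx.right i)).index ×ˢ ry.index),
        rx.left i ⊗ₜ[k] (((ℛ k (rx.right i)).left p.1 * ry.left p.2) ⊗ₜ[k]
          (((ℛ k (rx.right i)).right p.1 * ry.right p.2) * z)) := by
    rw [LinearMap.comp_apply, S12_tmul k V x y z rx, map_sum]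
    refine Finset.sum_congr rfl fun i _ => ?_
    rw [show S23 k V (rx.left i ⊗ₜ[k] ((rx.right i * y) ⊗ₜ[k] z)) =
        rx.left i ⊗ₜ[k] Sop k V ((rx.right i * y) ⊗ₜ[k] z) from rfl,
      Sop_tmul k V _ z (mulRepr k V _ _ (ℛ k (rx.right i)) ry), TensorProduct.tmul_sum]
    rfl
  -- LHS
  have hL : (S12 k V ∘ₗ S13 k V ∘ₗ S23 k V) (x ⊗ₜ[k] (y ⊗ₜ[k] z)) =
      ∑ j ∈ ry.index, ∑ i ∈ rx.index, ∑ m ∈ (ℛ k (rx.left i)).index,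
        (ℛ k (rx.left i)).left m ⊗ₜ[k] (((ℛ k (rx.left i)).right m * ry.left j) ⊗ₜ[k]
          (rx.right i * (ry.right j * z))) := by
    rw [LinearMap.comp_apply, LinearMap.comp_apply,
      show S23 k V (x ⊗ₜ[k] (y ⊗ₜ[k] z)) = x ⊗ₜ[k] Sop k V (y ⊗ₜ[k] z) from rfl,
      Sop_tmul k V y z ry, TensorProduct.tmul_sum, map_sum, map_sum]
    refine Finset.sum_congr rfl fun j _ => ?_
    rw [S13_tmul k V x (ry.left j) (ry.right j * z) rx, map_sum]
    refine Finset.sum_congr rfl fun i _ => ?_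
    rw [S12_tmul k V _ _ _ (ℛ k (rx.left i))]
  simp only [LinearMap.compr₂ₛₗ_apply, TensorProduct.mk_apply]
  rw [hR, hL]
  simp only [Finset.sum_product]
  rw [show (∑ i ∈ rx.index, ∑ m ∈ (ℛ k (rx.right i)).index, ∑ j ∈ ry.index,
      rx.left i ⊗ₜ[k] (((ℛ k (rx.right i)).left m * ry.left j) ⊗ₜ[k]
        (((ℛ k (rx.right i)).right m * ry.right j) * z))) =
      ∑ j ∈ ry.index, ∑ i ∈ rx.index, ∑ m ∈ (ℛ k (rx.right i)).index,
      rx.left i ⊗ₜ[k] (((ℛ k (rx.right i)).left m * ry.left j) ⊗ₜ[k]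
        (((ℛ k (rx.right i)).right m * ry.right j) * z)) from
    (Finset.sum_congr rfl fun i _ => Finset.sum_comm).trans Finset.sum_comm]
  refine Finset.sum_congr rfl fun j _ => ?_
  -- now apply coassociativity via sum_map_tmul_tmul_eq
  have key := Coalgebra.sum_map_tmul_tmul_eq (R := k) (A := V)
    (LinearMap.id (R := k) (M := V)) (LinearMap.mulRight k (ry.left j))
    (LinearMap.mulRight k (ry.right j * z)) x (repr := rx)
    (a₁ := fun i => ℛ k (rx.left i)) (a₂ := fun i => ℛ k (rx.right i))
  simpa [mul_assoc] using key.symm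

end PentagonBialgebra
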